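/- Let (A,·) be the semigroup K-algebra of the rectangular band I×J. A bilinear product * on A is an id-matching structure on (A,·) (i.e. * is associative and id-matching with ·) if and only if there exist scalars λ_{jk} ∈ K, for (j,k) ∈ J×I, such that e_{ij} * e_{kl} = λ_{jk} e_{il} for all (i,j),(k,l) ∈ I×J. -/

import Mathlib

/-- For the semigroup algebra `(A, ·)` of the rectangular band `I × J` over a field `K`,
a bilinear product `*` on `A` is an id-matching structure on `(A, ·)` (i.e. associative
and id-matching with `·`) if and only if there are scalars `λ_{jk} ∈ K` with
`e_{ij} * e_{kl} = λ_{jk} • e_{il}` for all `(i,j), (k,l) ∈ I × J`. -/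
theorem id_matching_structures_on_rectangular_band {K A I J : Type*} [Field K]
    [NonUnitalRing A] [Module K A] [SMulCommClass K A A] [IsScalarTower K A A]
    [Nonempty I] [Nonempty J]
    (e : Module.Basis (I × J) K A)
    (hmul : ∀ (i k : I) (j l : J), e (i, j) * e (k, l) = e (i, l))
    (star : A →ₗ[K] A →ₗ[K] A) :
    ((∀ a b c : A, star (star a b) c = star a (star b c)) ∧
      (∀ a b c : A, star a b * c = star a (b * c)) ∧
      (∀ a b c : A, star (a * b) c = a * star b c)) ↔
    ∃ lam : J → I → K, ∀ (i k : I) (j l : J),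
      star (e (i, j)) (e (k, l)) = lam j k • e (i, l) := by
  constructor
  · rintro ⟨hassoc, h2, h3⟩
    obtain ⟨i0⟩ := ‹Nonempty I›
    obtain ⟨l0⟩ := ‹Nonempty J›
    have key : ∀ j k, ∃ c : K, ∀ i l, star (e (i, j)) (e (k, l)) = c • e (i, l) := by
      intro j k
      set x := star (e (i0, j)) (e (k, l0)) with hx
      have hx1 : e (i0, j) * x = x := by
        rw [hx, ← h3, hmul]
      have hx2 : x * e (k, l0) = x := by
        rw [hx, h2, hmul]
      have main : ∀ y : A, ∃ c : K, e (i0, j) * y * e (k, l0) = c • e (i0, l0) := by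
        intro y
        have hy : y ∈ Submodule.span K (Set.range e) := by
          rw [e.span_eq]; trivial
        induction hy using Submodule.span_induction with
        | mem z hz =>
          obtain ⟨⟨p, q⟩, rfl⟩ := hz
          exact ⟨1, by rw [hmul, hmul, one_smul]⟩
        | zero => exact ⟨0, by simp⟩
        | add a b _ _ ha hb =>
          obtain ⟨c1, hc1⟩ := ha
          obtain ⟨c2, hc2⟩ := hb
          exact ⟨c1 + c2, by rw [mul_add, add_mul, hc1, hc2, add_smul]⟩
        | smul r a _ ha =>
          obtain ⟨c, hc⟩ := ha
          exact ⟨r * c, by rw [mul_smul_comm, smul_mul_assoc, hc, smul_smul]⟩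
      obtain ⟨c, hc⟩ := main x
      have hxc : x = c • e (i0, l0) := by rw [← hc, hx1, hx2]
      refine ⟨c, fun i l => ?_⟩
      have step1 : star (e (i, j)) (e (k, l0)) = c • e (i, l0) := by
        calc star (e (i, j)) (e (k, l0))
            = star (e (i, l0) * e (i0, j)) (e (k, l0)) := by rw [hmul]
          _ = e (i, l0) * x := by rw [h3]
          _ = e (i, l0) * (c • e (i0, l0)) := by rw [hxc]
          _ = c • e (i, l0) := by rw [mul_smul_comm, hmul]
      calc star (e (i, j)) (e (k, l))
          = star (e (i, j)) (e (k, l0) * e (k, l)) := by rw [hmul]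
        _ = star (e (i, j)) (e (k, l0)) * e (k, l) := by rw [h2]
        _ = (c • e (i, l0)) * e (k, l) := by rw [step1]
        _ = c • e (i, l) := by rw [smul_mul_assoc, hmul]
    choose lam hlam using key
    exact ⟨lam, fun i k j l => hlam j k i l⟩
  · rintro ⟨lam, hlam⟩
    have ext3 : ∀ (f g : A →ₗ[K] A →ₗ[K] A →ₗ[K] A),
        (∀ p q r, f (e p) (e q) (e r) = g (e p) (e q) (e r)) →
        ∀ a b c, f a b c = g a b c := by
      intro f g h a b c
      have hfg : f = g := e.ext fun p => e.ext fun q => e.ext fun r => h p q r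
      rw [hfg]
    refine ⟨?_, ?_, ?_⟩
    · intro a b c
      refine ext3 (star.compr₂ star)
        (((LinearMap.llcomp K A A A).comp star).compl₂ star) (fun p q r => ?_) a b c
      obtain ⟨i, j⟩ := p; obtain ⟨k, l⟩ := q; obtain ⟨m, n⟩ := r
      simp [hlam, smul_smul, mul_comm]
    · intro a b c
      refine ext3 (star.compr₂ (LinearMap.mul K A))
        (((LinearMap.llcomp K A A A).comp star).compl₂ (LinearMap.mul K A))
        (fun p q r => ?_) a b c
      obtain ⟨i, j⟩ := p; obtain ⟨k, l⟩ := q; obtain ⟨m, n⟩ := r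
      simp [hlam, hmul, smul_mul_assoc]
    · intro a b c
      refine ext3 ((LinearMap.mul K A).compr₂ star)
        (((LinearMap.llcomp K A A A).comp (LinearMap.mul K A)).compl₂ star)
        (fun p q r => ?_) a b c
      obtain ⟨i, j⟩ := p; obtain ⟨k, l⟩ := q; obtain ⟨m, n⟩ := r
      simp [hlam, hmul, mul_smul_comm]
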